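/- In the abstract gradient-discretisation setting with the L-solver setting, for every i ≥ 1 one has the one-step error inequality 2·‖e_i‖_*² + δt·L·‖e_i‖_m² ≤ δt·L·‖e_{i−1}‖_m², where e_i = u − u_i. -/

import Mathlib

/-- Weighted inner product `⟨u, v⟩_m = ∑ j, m j * u j * v j` on `X = B → ℝ`. -/
noncomputable def innerM {B : Type*} [Fintype B] (m : B → ℝ) (u v : B → ℝ) : ℝ :=
  ∑ j, m j * u j * v j

/-- Weighted norm `‖u‖_m = ⟨u, u⟩_m^{1/2}`. -/
noncomputable def normM {B : Type*} [Fintype B] (m : B → ℝ) (u : B → ℝ) : ℝ :=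
  Real.sqrt (innerM m u u)

/-- The dual norm `‖v‖_* = sup { ⟨v, w⟩_m : w ∈ X, ‖G w‖ = 1 }`. -/
noncomputable def dualNorm {B : Type*} [Fintype B] (m : B → ℝ)
    {F : Type*} [NormedAddCommGroup F] [InnerProductSpace ℝ F]
    (G : (B → ℝ) →ₗ[ℝ] F) (v : B → ℝ) : ℝ :=
  sSup {r : ℝ | ∃ w : B → ℝ, ‖G w‖ = 1 ∧ r = innerM m v w}

/-- One-step error inequality for the linearised (L) solver:
`2 ‖e_i‖_*² + δt L ‖e_i‖_m² ≤ δt L ‖e_{i-1}‖_m²` for every `i ≥ 1`, where `e_i = u - u_i`. -/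
lemma innerM_nonneg {B : Type*} [Fintype B] {m : B → ℝ} (hm : ∀ j, 0 < m j) (v : B → ℝ) :
    0 ≤ innerM m v v :=
  Finset.sum_nonneg fun j _ => by nlinarith [(hm j).le, sq_nonneg (v j)]

lemma normM_sq {B : Type*} [Fintype B] {m : B → ℝ} (hm : ∀ j, 0 < m j) (v : B → ℝ) :
    normM m v ^ 2 = innerM m v v := Real.sq_sqrt (innerM_nonneg hm v)

lemma innerM_sub_left {B : Type*} [Fintype B] (m : B → ℝ) (u v w : B → ℝ) :
    innerM m (u - v) w = innerM m u w - innerM m v w := by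
  simp [innerM, sub_mul, mul_sub, Finset.sum_sub_distrib]

lemma innerM_neg_right {B : Type*} [Fintype B] (m : B → ℝ) (u w : B → ℝ) :
    innerM m u (-w) = -innerM m u w := by
  simp [innerM, Finset.sum_neg_distrib]

lemma scalar_key (L Lζ x y c : ℝ) (hLζ : 0 < Lζ) (hL : Lζ / 2 ≤ L)
    (hcw : 0 ≤ c * y) (h2 : c ^ 2 ≤ Lζ * (c * y)) :
    x * (L * (y - x) - c) ≤ L / 2 * (y ^ 2 - x ^ 2) := by
  nlinarith [sq_nonneg (Lζ * (y - x) - 2 * c), sq_nonneg (x - y), hLζ.le,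
    mul_nonneg (by linarith : (0:ℝ) ≤ L - Lζ / 2) (sq_nonneg (x - y))]

theorem stmt_13 {B : Type*} [Fintype B] [Nonempty B] (m : B → ℝ) (hm : ∀ j, 0 < m j)
    {F : Type*} [NormedAddCommGroup F] [InnerProductSpace ℝ F]
    (G : (B → ℝ) →ₗ[ℝ] F) (hG : Function.Injective G)
    (δt Lζ L : ℝ) (hδt : 0 < δt) (hLζ : 0 < Lζ) (hL : L ≥ Lζ / 2)
    (ζ : ℝ → ℝ) (hmono : Monotone ζ) (hlip : ∀ a b : ℝ, |ζ a - ζ b| ≤ Lζ * |a - b|)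
    (b : (B → ℝ) →ₗ[ℝ] ℝ)
    (u : B → ℝ)
    (hu : ∀ φ : B → ℝ,
      innerM m u φ + δt * (inner ℝ (G (fun j => ζ (u j))) (G φ) : ℝ) = b φ)
    (useq : ℕ → B → ℝ)
    (hit : ∀ i : ℕ, 1 ≤ i → ∀ φ : B → ℝ,
      innerM m (useq i) φ + δt * L * (inner ℝ (G (useq i)) (G φ) : ℝ)
        = δt * (L * (inner ℝ (G (useq (i - 1))) (G φ) : ℝ)
            - (inner ℝ (G (fun j => ζ (useq (i - 1) j))) (G φ) : ℝ)) + b φ) :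
    ∀ i : ℕ, 1 ≤ i →
      2 * dualNorm m G (u - useq i) ^ 2 + δt * L * normM m (u - useq i) ^ 2
        ≤ δt * L * normM m (u - useq (i - 1)) ^ 2 := by
  intro i hi
  set e : B → ℝ := u - useq i with he
  set ep : B → ℝ := u - useq (i - 1) with hep
  set ζu : B → ℝ := fun j => ζ (u j) with hζu
  set ζv : B → ℝ := fun j => ζ (useq (i - 1) j) with hζv
  set ψ : B → ℝ := fun j => L * (useq i j - useq (i - 1) j) - (ζu j - ζv j) with hψ
  -- the error equation
  have key : ∀ φ : B → ℝ, innerM m e φ = δt * (inner ℝ (G ψ) (G φ) : ℝ) := by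
    intro φ
    have h1 := hu φ
    have h2 := hit i hi φ
    have hψeq : ψ = L • useq i - L • useq (i - 1) - ζu + ζv := by
      funext j
      simp [hψ, Pi.smul_apply, smul_eq_mul]
      ring
    have hGψ : (inner ℝ (G ψ) (G φ) : ℝ)
        = L * (inner ℝ (G (useq i)) (G φ) : ℝ) - L * (inner ℝ (G (useq (i - 1))) (G φ) : ℝ)
          - (inner ℝ (G ζu) (G φ) : ℝ) + (inner ℝ (G ζv) (G φ) : ℝ) := by
      rw [hψeq]
      simp only [map_add, map_sub, map_smul]
      rw [inner_add_left, inner_sub_left, inner_sub_left, real_inner_smul_left,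
        real_inner_smul_left]
    rw [innerM_sub_left, hGψ]
    linarith [h1, h2]
  -- bound on the dual norm
  have hbound : ∀ r ∈ {r : ℝ | ∃ w : B → ℝ, ‖G w‖ = 1 ∧ r = innerM m e w},
      r ≤ δt * ‖G ψ‖ := by
    rintro r ⟨w, hw, rfl⟩
    rw [key w]
    have := real_inner_le_norm (G ψ) (G w)
    rw [hw, mul_one] at this
    exact mul_le_mul_of_nonneg_left this hδt.le
  have hbdd : BddAbove {r : ℝ | ∃ w : B → ℝ, ‖G w‖ = 1 ∧ r = innerM m e w} :=
    ⟨δt * ‖G ψ‖, hbound⟩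
  have hdn : dualNorm m G e ≤ δt * ‖G ψ‖ :=
    Real.sSup_le hbound (by positivity)
  -- nonnegativity of the dual norm
  have hdn0 : 0 ≤ dualNorm m G e := by
    have hv0 : (fun _ : B => (1 : ℝ)) ≠ 0 := by
      intro h
      have := congrFun h (Classical.arbitrary B)
      simpa using this
    have hGv0 : G (fun _ : B => (1 : ℝ)) ≠ 0 := by
      intro h
      exact hv0 (hG (by simpa using h))
    have hn : 0 < ‖G (fun _ : B => (1 : ℝ))‖ := norm_pos_iff.mpr hGv0
    set w : B → ℝ := ‖G (fun _ : B => (1 : ℝ))‖⁻¹ • (fun _ : B => (1 : ℝ)) with hwdef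
    have hw1 : ‖G w‖ = 1 := by
      rw [hwdef, map_smul, norm_smul, norm_inv, Real.norm_eq_abs, abs_of_pos hn,
        inv_mul_cancel₀ hn.ne']
    have hmem1 : innerM m e w ∈ {r : ℝ | ∃ w : B → ℝ, ‖G w‖ = 1 ∧ r = innerM m e w} :=
      ⟨w, hw1, rfl⟩
    have hmem2 : -innerM m e w ∈ {r : ℝ | ∃ w : B → ℝ, ‖G w‖ = 1 ∧ r = innerM m e w} :=
      ⟨-w, by rw [map_neg, norm_neg, hw1], (innerM_neg_right m e w).symm⟩
    have l1 := le_csSup hbdd hmem1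
    have l2 := le_csSup hbdd hmem2
    unfold dualNorm
    rcases le_total 0 (innerM m e w) with h | h
    · linarith
    · linarith
  -- energy identity
  have hen : innerM m e ψ = δt * ‖G ψ‖ ^ 2 := by
    rw [key ψ, real_inner_self_eq_norm_sq]
  -- pointwise estimate
  have hpt : innerM m e ψ ≤ L / 2 * (innerM m ep ep - innerM m e e) := by
    rw [innerM, innerM, innerM, ← Finset.sum_sub_distrib, Finset.mul_sum]
    apply Finset.sum_le_sum
    intro j _
    have hje : e j = u j - useq i j := rfl
    have hjep : ep j = u j - useq (i - 1) j := rfl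
    set x := u j - useq i j with hx
    set y := u j - useq (i - 1) j with hy
    set c := ζ (u j) - ζ (useq (i - 1) j) with hc
    have hcw : 0 ≤ c * y := by
      rcases le_total (useq (i - 1) j) (u j) with h | h
      · exact mul_nonneg (by simpa [hc] using sub_nonneg.mpr (hmono h)) (by simp [hy]; linarith)
      · have h1 : c ≤ 0 := by simpa [hc] using sub_nonpos.mpr (hmono h)
        have h2 : y ≤ 0 := by simp [hy]; linarith
        nlinarith [mul_nonneg (neg_nonneg.mpr h1) (neg_nonneg.mpr h2)]
    have h2 : c ^ 2 ≤ Lζ * (c * y) := by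
      have hl := hlip (u j) (useq (i - 1) j)
      have : |c| * |c| ≤ Lζ * |y| * |c| :=
        mul_le_mul_of_nonneg_right (by simpa [hc, hy] using hl) (abs_nonneg c)
      have habs : |c * y| = c * y := abs_of_nonneg hcw
      calc c ^ 2 = |c| * |c| := by rw [abs_mul_abs_self, sq]
        _ ≤ Lζ * |y| * |c| := this
        _ = Lζ * |c * y| := by rw [abs_mul]; ring
        _ = Lζ * (c * y) := by rw [habs]
    have hs := scalar_key L Lζ x y c hLζ hL hcw h2
    have hψj : ψ j = L * (y - x) - c := by simp only [hψ, hζu, hζv, hx, hy, hc]; ring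
    have : e j * ψ j ≤ L / 2 * (y ^ 2 - x ^ 2) := by rw [hje, hψj]; exact hs
    calc m j * e j * ψ j = m j * (e j * ψ j) := by ring
      _ ≤ m j * (L / 2 * (y ^ 2 - x ^ 2)) := mul_le_mul_of_nonneg_left this (hm j).le
      _ = L / 2 * (m j * ep j * ep j - m j * e j * e j) := by
          rw [hje, hjep]; ring
  -- put everything together
  have hsq : dualNorm m G e ^ 2 ≤ (δt * ‖G ψ‖) ^ 2 := by
    apply pow_le_pow_left₀ hdn0 hdn
  have hfin : (δt * ‖G ψ‖) ^ 2 = δt * innerM m e ψ := by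
    rw [hen]; ring
  have hA := normM_sq hm e
  have hB := normM_sq hm ep
  have hmul : δt * innerM m e ψ ≤ δt * (L / 2 * (innerM m ep ep - innerM m e e)) :=
    mul_le_mul_of_nonneg_left hpt hδt.le
  have hmul2 := mul_le_mul_of_nonneg_left hpt (by positivity : (0:ℝ) ≤ 2 * δt)
  rw [hA, hB]
  linarith [hsq, hmul2]
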